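/- Let r₁ ≥ r₂ ≥ ⋯ ≥ r_k be positive numbers with r₁ ≥ k and r_k ≤ k. If x₁, …, x_k are positive numbers satisfying r₁ + x₁ = r₂ + x₂ = ⋯ = r_k + x_k = 1 + 1/x₁ + ⋯ + 1/x_k, then x₁ ≤ 1 and x_k ≥ 1. -/
import Mathlib


open Matrix BigOperators Finset

/-- A positive square matrix is reciprocal if `A j i = 1 / A i j` for all `i, j`. -/
def IsReciprocal {n : ℕ} (A : Matrix (Fin n) (Fin n) ℝ) : Prop :=
  (∀ i j, 0 < A i j) ∧ ∀ i j, A j i = 1 / A i j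

/-- A reciprocal matrix is consistent if `A i j * A j k = A i k` for all `i, j, k`. -/
def IsConsistent {n : ℕ} (A : Matrix (Fin n) (Fin n) ℝ) : Prop :=
  IsReciprocal A ∧ ∀ i j k, A i j * A j k = A i k

/-- A vector is positive if all its entries are positive. -/
def PosVec {n : ℕ} (w : Fin n → ℝ) : Prop := ∀ i, 0 < w i

/-- A positive vector `w` is efficient for `A` if any positive vector `v` whose associated
consistent matrix approximates `A` at least as well as that of `w` (entrywise) is a positive
multiple of `w`. -/
def IsEfficient {n : ℕ} (A : Matrix (Fin n) (Fin n) ℝ) (w : Fin n → ℝ) : Prop :=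
  PosVec w ∧ ∀ v : Fin n → ℝ, PosVec v →
    (∀ i j, |A i j - v i / v j| ≤ |A i j - w i / w j|) →
    ∃ c : ℝ, 0 < c ∧ v = c • w

/-- The `i`-th row sum of a matrix. -/
noncomputable def rowSum {n : ℕ} (A : Matrix (Fin n) (Fin n) ℝ) (i : Fin n) : ℝ := ∑ j, A i j

/-- Given the row sums `r` in nonincreasing order (`r 0` the largest), the auxiliary function
`f(x) = 1/x + ∑_{i=2}^{k} 1/(r₁ - rᵢ + x) + 1 - r₁ - x` (note the `i = 1` term of the sum is
`1/x` since `r 0 - r 0 = 0`). -/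
noncomputable def auxF {k : ℕ} (r : Fin (k + 1) → ℝ) (x : ℝ) : ℝ :=
  (∑ i, 1 / (r 0 - r i + x)) + 1 - r 0 - x

/-- A reciprocal matrix `B` is well-behaved if, with row sums `r₁ ≥ ⋯ ≥ r_k`, either
`r₁ - r_k ≥ 1` (type I), or `r₁ - r_k < 1` and `f(1 + r_k - r₁) ≥ 0` (type II). -/
def WellBehaved {k : ℕ} (B : Matrix (Fin (k + 1)) (Fin (k + 1)) ℝ) : Prop :=
  ∃ σ : Equiv.Perm (Fin (k + 1)), Antitone (rowSum B ∘ σ) ∧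
    (1 ≤ rowSum B (σ 0) - rowSum B (σ (Fin.last k)) ∨
      (rowSum B (σ 0) - rowSum B (σ (Fin.last k)) < 1 ∧
        0 ≤ auxF (rowSum B ∘ σ) (1 + rowSum B (σ (Fin.last k)) - rowSum B (σ 0))))

/-- Let `r₁ ≥ ⋯ ≥ r_k` be positive with `r₁ ≥ k` and `r_k ≤ k` (here `k` plays the role of
`k+1` entries indexed by `Fin (k+1)`). If positive `x₁, …, x_k` satisfy
`rᵢ + xᵢ = 1 + 1/x₁ + ⋯ + 1/x_k` for all `i`, then `x₁ ≤ 1` and `x_k ≥ 1`. -/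
theorem stmt13 {k : ℕ} (r x : Fin (k + 1) → ℝ) (hr : Antitone r) (hrpos : ∀ i, 0 < r i)
    (hr1 : ((k : ℝ) + 1) ≤ r 0) (hrk : r (Fin.last k) ≤ (k : ℝ) + 1)
    (hx : ∀ i, 0 < x i)
    (heq : ∀ i, r i + x i = 1 + ∑ l, 1 / x l) :
    x 0 ≤ 1 ∧ 1 ≤ x (Fin.last k) := by
  have hmin : ∀ i, x 0 ≤ x i := fun i => by
    have h0 := heq 0; have hi := heq i
    have := hr (Fin.zero_le i); linarith
  have hmax : ∀ i, x i ≤ x (Fin.last k) := fun i => by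
    have h0 := heq (Fin.last k); have hi := heq i
    have := hr (Fin.le_last i); linarith
  constructor
  · by_contra h
    push_neg at h
    have hsum : ∑ l, 1 / x l ≤ (k + 1 : ℝ) * (1 / x 0) := by
      calc ∑ l, 1 / x l ≤ ∑ _l : Fin (k+1), 1 / x 0 := by
            apply Finset.sum_le_sum
            intro i _
            exact one_div_le_one_div_of_le (hx 0) (hmin i)
        _ = (k + 1 : ℝ) * (1 / x 0) := by
            rw [Finset.sum_const, Finset.card_univ, Fintype.card_fin]; push_cast; ring
    have h1 : 1 / x 0 < 1 := by
      rw [div_lt_one (hx 0)]; linarith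
    have hk : (0:ℝ) ≤ (k:ℝ) := Nat.cast_nonneg k
    have : (k + 1 : ℝ) * (1 / x 0) < (k + 1 : ℝ) := by nlinarith
    have h0 := heq 0
    linarith
  · by_contra h
    push_neg at h
    have hsum : (k + 1 : ℝ) * (1 / x (Fin.last k)) ≤ ∑ l, 1 / x l := by
      calc (k + 1 : ℝ) * (1 / x (Fin.last k))
          = ∑ _l : Fin (k+1), 1 / x (Fin.last k) := by
            rw [Finset.sum_const, Finset.card_univ, Fintype.card_fin]; push_cast; ring
        _ ≤ ∑ l, 1 / x l := by
            apply Finset.sum_le_sum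
            intro i _
            exact one_div_le_one_div_of_le (hx i) (hmax i)
    have h1 : 1 < 1 / x (Fin.last k) := by
      rw [lt_div_iff₀ (hx (Fin.last k))]; linarith
    have hk : (0:ℝ) ≤ (k:ℝ) := Nat.cast_nonneg k
    have : (k + 1 : ℝ) < (k + 1 : ℝ) * (1 / x (Fin.last k)) := by nlinarith
    have h0 := heq (Fin.last k)
    linarith
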